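/- Let G be a finite non-cyclic group and a, b ∈ G distinct elements that are non-adjacent in the power graph P(G), with N_a ≠ N_b. Then a and b are adjacent in the enhanced power graph P_e(G) if and only if there exists c ∈ G adjacent in P(G) to both a and b with N_c ≥ max{N_a, N_b}. -/

import Mathlib

def padj {G : Type*} [Group G] (a b : G) : Prop :=
  a ≠ b ∧ (Subgroup.zpowers a ≤ Subgroup.zpowers b ∨ Subgroup.zpowers b ≤ Subgroup.zpowers a)

def pnbhd {G : Type*} [Group G] (a : G) : Set G := {x | padj a x}

def closedTwins {G : Type*} [Group G] (a : G) : Set G :=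
  {b | padj a b ∧ pnbhd a \ {b} = pnbhd b \ {a}}

noncomputable def Ncount {G : Type*} [Group G] (a : G) : ℕ := (closedTwins a).ncard + 1

def eadj {G : Type*} [Group G] (a b : G) : Prop :=
  a ≠ b ∧ ∃ c : G, a ∈ Subgroup.zpowers c ∧ b ∈ Subgroup.zpowers c

open Subgroup

section Aux

variable {G : Type*} [Group G]

/-- the closed neighborhood of `a` in the power graph -/
def cnb (a : G) : Set G := {x | zpowers a ≤ zpowers x ∨ zpowers x ≤ zpowers a}

lemma mem_cnb {a x : G} : x ∈ cnb a ↔ (zpowers a ≤ zpowers x ∨ zpowers x ≤ zpowers a) :=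
  Iff.rfl

lemma mem_cnb_self (a : G) : a ∈ cnb a := Or.inl le_rfl

lemma cnb_congr {a b : G} (h : zpowers a = zpowers b) : cnb a = cnb b := by
  unfold cnb; rw [h]

lemma padj_iff {a b : G} : padj a b ↔ a ≠ b ∧ b ∈ cnb a := Iff.rfl

/-- the closed twin class of `a` (including `a`) -/
def KK (a : G) : Set G := {t | cnb t = cnb a}

lemma mem_KK_self (a : G) : a ∈ KK a := rfl

lemma closedTwins_eq (a : G) : closedTwins a = KK a \ {a} := by
  ext b
  constructor
  · rintro ⟨⟨hab, hcmp⟩, hset⟩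
    refine ⟨?_, fun h => hab (Set.mem_singleton_iff.1 h).symm⟩
    show cnb b = cnb a
    ext y
    by_cases hya : y = a
    · subst hya
      simp only [mem_cnb]
      exact iff_of_true (Or.symm hcmp) (mem_cnb_self y)
    by_cases hyb : y = b
    · subst hyb
      simp only [mem_cnb]
      exact iff_of_true (mem_cnb_self y) hcmp
    · have h1 : y ∈ cnb b ↔ y ∈ pnbhd b \ {a} := by
        simp only [pnbhd, Set.mem_diff, Set.mem_setOf_eq, Set.mem_singleton_iff, padj_iff]
        constructor
        · intro h; exact ⟨⟨fun he => hyb he.symm, h⟩, hya⟩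
        · rintro ⟨⟨_, h⟩, _⟩; exact h
      have h2 : y ∈ cnb a ↔ y ∈ pnbhd a \ {b} := by
        simp only [pnbhd, Set.mem_diff, Set.mem_setOf_eq, Set.mem_singleton_iff, padj_iff]
        constructor
        · intro h; exact ⟨⟨fun he => hya he.symm, h⟩, hyb⟩
        · rintro ⟨⟨_, h⟩, _⟩; exact h
      rw [h1, h2, hset]
  · rintro ⟨hK, hba⟩
    have hK' : cnb b = cnb a := hK
    have hba' : b ≠ a := hba
    have hbc : b ∈ cnb a := by rw [← hK']; exact mem_cnb_self b
    refine ⟨⟨fun h => hba' h.symm, hbc⟩, ?_⟩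
    ext y
    simp only [pnbhd, Set.mem_diff, Set.mem_setOf_eq, Set.mem_singleton_iff, padj_iff]
    constructor
    · rintro ⟨⟨hay, hy⟩, hyb⟩
      exact ⟨⟨fun h => hyb h.symm, by rwa [hK']⟩, fun h => hay h.symm⟩
    · rintro ⟨⟨hby, hy⟩, hya⟩
      exact ⟨⟨fun h => hya h.symm, by rwa [← hK']⟩, fun h => hby h.symm⟩

lemma Ncount_eq [Finite G] (a : G) : Ncount a = (KK a).ncard := by
  rw [Ncount, closedTwins_eq,
    Set.ncard_diff_singleton_add_one (mem_KK_self a) (Set.toFinite _)]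

variable [Finite G]

lemma orderOf_dvd_of_zle {t g : G} (h : zpowers t ≤ zpowers g) : orderOf t ∣ orderOf g := by
  have := Subgroup.orderOf_dvd_natCard (zpowers g) (h (mem_zpowers t))
  rwa [Nat.card_zpowers] at this

lemma zeq_of_zle_of_dvd {t g : G} (h : zpowers t ≤ zpowers g) (hd : orderOf g ∣ orderOf t) :
    zpowers t = zpowers g :=
  Subgroup.eq_of_le_of_card_ge h
    (by rw [Nat.card_zpowers, Nat.card_zpowers]; exact Nat.le_of_dvd (orderOf_pos t) hd)

lemma isCyclic_zpowers (g : G) : IsCyclic (zpowers g) := by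
  refine ⟨⟨g, mem_zpowers g⟩, fun z => ?_⟩
  obtain ⟨k, hk⟩ := mem_zpowers_iff.1 z.2
  exact ⟨k, Subtype.ext (by simpa using hk)⟩

lemma mem_zpowers_of_dvd {g t y : G} (ht : t ∈ zpowers g) (hy : y ∈ zpowers g)
    (h : orderOf y ∣ orderOf t) : y ∈ zpowers t := by
  classical
  have : Fintype G := Fintype.ofFinite G
  have hc : IsCyclic ↥(zpowers g) := _root_.isCyclic_zpowers g
  set t' : ↥(zpowers g) := ⟨t, ht⟩ with ht'
  set y' : ↥(zpowers g) := ⟨y, hy⟩ with hy'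
  have hot : orderOf t' = orderOf t := orderOf_mk t ht
  have hn : 0 < orderOf t := orderOf_pos t
  have hS := IsCyclic.card_pow_eq_one_le (α := ↥(zpowers g)) (n := orderOf t) hn
  set S := Finset.univ.filter (fun z : ↥(zpowers g) => z ^ orderOf t = 1) with hSdef
  set T := Finset.univ.filter (fun z : ↥(zpowers g) => z ∈ zpowers t') with hTdef
  have ht'pow : t' ^ orderOf t = 1 := by rw [← hot]; exact pow_orderOf_eq_one t'
  have hTS : T ⊆ S := by
    intro z hz
    simp only [hTdef, Finset.mem_filter, Finset.mem_univ, true_and] at hz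
    obtain ⟨k, hk⟩ := mem_zpowers_iff.1 hz
    simp only [hSdef, Finset.mem_filter, Finset.mem_univ, true_and]
    rw [← hk, ← zpow_natCast, ← zpow_mul, mul_comm, zpow_mul, zpow_natCast, ht'pow, one_zpow]
  have hT : T.card = orderOf t := by
    have h1 : T.card = Fintype.card (zpowers t') := by
      rw [hTdef, ← Fintype.card_subtype]
    rw [h1, Fintype.card_zpowers, hot]
  have hST : T = S := Finset.eq_of_subset_of_card_le hTS (by rw [hT]; exact hS)
  have hy'S : y' ∈ S := by
    simp only [hSdef, Finset.mem_filter, Finset.mem_univ, true_and]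
    apply orderOf_dvd_iff_pow_eq_one.1
    rw [orderOf_mk]; exact h
  rw [← hST] at hy'S
  simp only [hTdef, Finset.mem_filter, Finset.mem_univ, true_and] at hy'S
  obtain ⟨k, hk⟩ := mem_zpowers_iff.1 hy'S
  exact mem_zpowers_iff.2 ⟨k, by simpa using congrArg Subtype.val hk⟩

lemma zle_iff_dvd {g t y : G} (ht : t ∈ zpowers g) (hy : y ∈ zpowers g) :
    zpowers y ≤ zpowers t ↔ orderOf y ∣ orderOf t :=
  ⟨orderOf_dvd_of_zle, fun h => zpowers_le.2 (mem_zpowers_of_dvd ht hy h)⟩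

lemma count_orderOf (g : G) {d : ℕ} (hd : d ∣ orderOf g) :
    {t : G | t ∈ zpowers g ∧ orderOf t = d}.ncard = d.totient := by
  classical
  have : Fintype G := Fintype.ofFinite G
  have hc : IsCyclic ↥(zpowers g) := _root_.isCyclic_zpowers g
  have hdvd : d ∣ Fintype.card (zpowers g) := by rwa [Fintype.card_zpowers]
  have hcount := IsCyclic.card_orderOf_eq_totient (α := ↥(zpowers g)) hdvd
  have e : {t : G | t ∈ zpowers g ∧ orderOf t = d} ≃ {z : ↥(zpowers g) // orderOf z = d} :=
    { toFun := fun t => ⟨⟨t.1, t.2.1⟩, by rw [orderOf_mk]; exact t.2.2⟩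
      invFun := fun z => ⟨z.1.1, z.1.2, by rw [← orderOf_mk z.1.1 z.1.2]; exact z.2⟩
      left_inv := fun t => rfl
      right_inv := fun z => rfl }
  rw [← Nat.card_coe_set_eq, Nat.card_congr e, Nat.card_eq_fintype_card,
    Fintype.card_subtype]
  convert hcount using 2

lemma gen_le_K (g : G) : (orderOf g).totient ≤ (KK g).ncard := by
  rw [← count_orderOf g dvd_rfl]
  apply Set.ncard_le_ncard _ (Set.toFinite _)
  rintro t ⟨htm, hto⟩
  have hz : zpowers t = zpowers g :=
    zeq_of_zle_of_dvd (zpowers_le.2 htm) (by rw [hto])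
  exact cnb_congr hz

end Aux

lemma sum_tot (n p : ℕ) (hp : p.Prime) (hn : 0 < n) (s : ℕ) :
    ∑ j ∈ Finset.range s, (n * p ^ j).totient ≤ (n * p ^ s).totient := by
  induction s with
  | zero => simp
  | succ s ih =>
    rw [Finset.sum_range_succ]
    rcases Nat.eq_zero_or_pos s with rfl | hs
    · simp only [Finset.range_zero, Finset.sum_empty, pow_zero, mul_one, zero_add, pow_one]
      exact Nat.le_of_dvd (Nat.totient_pos.2 (Nat.mul_pos hn hp.pos)) (Nat.totient_dvd_of_dvd ⟨p, rfl⟩)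
    · have hpd : p ∣ n * p ^ s := Dvd.dvd.mul_left (dvd_pow_self p hs.ne') n
      have h2 : (n * p ^ (s + 1)).totient = p * (n * p ^ s).totient := by
        rw [show n * p ^ (s + 1) = p * (n * p ^ s) by ring,
          Nat.totient_mul_of_prime_of_dvd hp hpd]
      rw [h2]
      have hp2 := hp.two_le
      have := Nat.add_le_add_right ih ((n * p ^ s).totient)
      nlinarith [Nat.totient_pos.2 (show 0 < n * p ^ s by positivity)]

lemma num_lemma {m d1 dk : ℕ} (hd1 : 0 < d1) (h1 : d1 ∣ dk) (h2 : dk ∣ m) (hlt : d1 < dk)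
    (hnem : dk ≠ m) (hm : 0 < m)
    (star : ∀ e, e ∣ m → ((e ∣ d1 ∨ d1 ∣ e) ↔ (e ∣ dk ∨ dk ∣ e))) :
    ∃ p s, p.Prime ∧ m = d1 * p ^ s := by
  obtain ⟨u, hu⟩ : d1 ∣ m := h1.trans h2
  obtain ⟨v, hv⟩ := h1
  have hu0 : 0 < u := by
    rcases Nat.eq_zero_or_pos u with rfl | h
    · rw [mul_zero] at hu; omega
    · exact h
  have hv1 : 1 < v := by
    by_contra h
    push_neg at h
    interval_cases v
    · rw [mul_zero] at hv; omega
    · rw [mul_one] at hv; omega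
  have hvu : v ∣ u := by
    have : d1 * v ∣ d1 * u := by rw [← hv, ← hu]; exact h2
    exact (Nat.mul_dvd_mul_iff_left hd1).1 this
  have hdklt : dk < m := lt_of_le_of_ne (Nat.le_of_dvd hm h2) hnem
  have hvu' : v < u := by
    have : d1 * v < d1 * u := by rw [← hv, ← hu]; exact hdklt
    exact lt_of_mul_lt_mul_left this (le_of_lt hd1)
  have starW : ∀ w, w ∣ u → (w ∣ v ∨ v ∣ w) := by
    intro w hw
    have he : d1 * w ∣ m := by rw [hu]; exact mul_dvd_mul_left d1 hw
    have := (star (d1 * w) he).1 (Or.inr ⟨w, rfl⟩)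
    rcases this with h | h
    · left
      rw [hv] at h
      exact (Nat.mul_dvd_mul_iff_left hd1).1 h
    · right
      rw [hv] at h
      exact (Nat.mul_dvd_mul_iff_left hd1).1 h
  have hprimev : ∀ q, q.Prime → q ∣ u → q ∣ v := by
    intro q hq hqu
    rcases starW q hqu with h | h
    · exact h
    · rcases (Nat.dvd_prime hq).1 h with h' | h'
      · omega
      · rw [h']
  have hu1 : u ≠ 1 := by omega
  set p := u.minFac with hpdef
  have hp : p.Prime := Nat.minFac_prime hu1
  have huniq : ∀ q, q.Prime → q ∣ u → q = p := by
    intro q hq hqu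
    by_contra hqp
    have hpu : p ∣ u := Nat.minFac_dvd u
    have hpv : p ∣ v := hprimev p hp hpu
    have hqv : q ∣ v := hprimev q hq hqu
    have hudvd : u ∣ v := by
      rw [Nat.dvd_iff_prime_pow_dvd_dvd]
      intro r k hr hrk
      rcases Nat.eq_zero_or_pos k with rfl | hk
      · simpa using (one_dvd v)
      have hr' : r.Prime := hr
      rcases starW (r ^ k) hrk with h | h
      · exact h
      · exfalso
        obtain ⟨i, hi, hvi⟩ := (Nat.dvd_prime_pow hr').1 h
        have hi1 : 1 ≤ i := by
          rcases Nat.eq_zero_or_pos i with rfl | h'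
          · simp at hvi; omega
          · exact h'
        have hpr : p = r := by
          have hh : p ∣ r ^ i := hvi ▸ hpv
          exact (Nat.prime_dvd_prime_iff_eq hp hr').1 (hp.dvd_of_dvd_pow hh)
        have hqr : q = r := by
          have hh : q ∣ r ^ i := hvi ▸ hqv
          exact (Nat.prime_dvd_prime_iff_eq hq hr').1 (hq.dvd_of_dvd_pow hh)
        exact hqp (hqr.trans hpr.symm)
    have : u ≤ v := Nat.le_of_dvd (by omega) hudvd
    omega
  have := Nat.eq_prime_pow_of_unique_prime_dvd (n := u) (p := p) (by omega)
    (fun {q} hq hqu => huniq q hq hqu)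
  exact ⟨p, u.primeFactorsList.length, hp, by rw [hu]; exact congrArg (fun z => d1 * z) this⟩

lemma ncard_biUnion_le {α : Type*} [Finite α] (F : Finset ℕ) (Y : ℕ → Set α) :
    (⋃ j ∈ F, Y j).ncard ≤ ∑ j ∈ F, (Y j).ncard := by
  classical
  induction F using Finset.induction with
  | empty => simp
  | @insert a F ha ih =>
    rw [Finset.sum_insert ha, Finset.set_biUnion_insert]
    exact le_trans (Set.ncard_union_le _ _) (Nat.add_le_add_left ih _)

lemma key {G : Type*} [Group G] [Finite G] (g x : G)
    (h : ∀ t ∈ KK x, zpowers t < zpowers g) :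
    (KK x).ncard ≤ (orderOf g).totient := by
  classical
  set m := orderOf g with hmdef
  have hm : 0 < m := orderOf_pos g
  have hmem : ∀ t ∈ KK x, t ∈ zpowers g := fun t ht => (h t ht).le (mem_zpowers t)
  have hdvd : ∀ t ∈ KK x, orderOf t ∣ m := fun t ht => orderOf_dvd_of_zle (h t ht).le
  have hnem : ∀ t ∈ KK x, orderOf t ≠ m := by
    intro t ht he
    exact (h t ht).ne (zeq_of_zle_of_dvd (h t ht).le (by rw [he]))
  obtain ⟨t1, ht1, hmin⟩ :=
    Set.exists_min_image (KK x) orderOf (Set.toFinite _) ⟨x, mem_KK_self x⟩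
  set d1 := orderOf t1 with hd1def
  have hd1pos : 0 < d1 := orderOf_pos t1
  have hcomp : ∀ t ∈ KK x, ∀ t' ∈ KK x, zpowers t ≤ zpowers t' ∨ zpowers t' ≤ zpowers t := by
    intro t ht t' ht'
    have h' : t' ∈ cnb t := by
      show t' ∈ cnb t
      rw [show cnb t = cnb x from ht, ← show cnb t' = cnb x from ht']
      exact mem_cnb_self t'
    exact h'
  have hd1 : ∀ t ∈ KK x, d1 ∣ orderOf t := by
    intro t ht
    rcases hcomp t1 ht1 t ht with h' | h'
    · exact orderOf_dvd_of_zle h'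
    · have hdd := orderOf_dvd_of_zle h'
      have heq : orderOf t = d1 := le_antisymm (Nat.le_of_dvd hd1pos hdd) (hmin t ht)
      rw [heq]
  by_cases hall : ∀ t ∈ KK x, orderOf t = d1
  · have hsub : KK x ⊆ {t | t ∈ zpowers g ∧ orderOf t = d1} := fun t ht => ⟨hmem t ht, hall t ht⟩
    calc (KK x).ncard ≤ {t : G | t ∈ zpowers g ∧ orderOf t = d1}.ncard :=
          Set.ncard_le_ncard hsub (Set.toFinite _)
      _ = d1.totient := count_orderOf g (hdvd t1 ht1)
      _ ≤ m.totient := Nat.le_of_dvd (Nat.totient_pos.2 hm)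
          (Nat.totient_dvd_of_dvd (hdvd t1 ht1))
  · push_neg at hall
    obtain ⟨t2, ht2, ht2ne⟩ := hall
    obtain ⟨tk, htk, hmax⟩ :=
      Set.exists_max_image (KK x) orderOf (Set.toFinite _) ⟨x, mem_KK_self x⟩
    set dk := orderOf tk with hdkdef
    have hlt : d1 < dk := by
      have ha1 := hmin t2 ht2
      have ha2 := hmax t2 ht2
      have hle : d1 ≤ dk := le_trans ha1 ha2
      rcases eq_or_lt_of_le hle with he | h'
      · exfalso; apply ht2ne; omega
      · exact h'
    have star : ∀ e, e ∣ m → ((e ∣ d1 ∨ d1 ∣ e) ↔ (e ∣ dk ∨ dk ∣ e)) := by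
      intro e he
      set y := g ^ (m / e) with hydef
      have hy : y ∈ zpowers g := pow_mem (mem_zpowers g) _
      have hoy : orderOf y = e := by
        rw [hydef, orderOf_pow g, Nat.gcd_eq_right (Nat.div_dvd_of_dvd he),
          Nat.div_div_self he hm.ne']
      have e1 : y ∈ cnb t1 ↔ (e ∣ d1 ∨ d1 ∣ e) := by
        rw [mem_cnb, zle_iff_dvd hy (hmem t1 ht1), zle_iff_dvd (hmem t1 ht1) hy, hoy]
        tauto
      have e2 : y ∈ cnb tk ↔ (e ∣ dk ∨ dk ∣ e) := by
        rw [mem_cnb, zle_iff_dvd hy (hmem tk htk), zle_iff_dvd (hmem tk htk) hy, hoy]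
        tauto
      have hc : cnb t1 = cnb tk := by
        rw [show cnb t1 = cnb x from ht1, ← show cnb tk = cnb x from htk]
      rw [← e1, ← e2, hc]
    obtain ⟨p, s, hp, hms⟩ :=
      num_lemma hd1pos (hd1 tk htk) (hdvd tk htk) hlt (hnem tk htk) hm star
    have hcover : KK x ⊆ ⋃ j ∈ Finset.range s, {t : G | t ∈ zpowers g ∧ orderOf t = d1 * p ^ j} := by
      intro t ht
      obtain ⟨w, hw⟩ := hd1 t ht
      have hwdvd : w ∣ p ^ s := by
        have hh : d1 * w ∣ d1 * p ^ s := by rw [← hw, ← hms]; exact hdvd t ht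
        exact (Nat.mul_dvd_mul_iff_left hd1pos).1 hh
      obtain ⟨j, hj, rfl⟩ := (Nat.dvd_prime_pow hp).1 hwdvd
      have hjs : j < s := by
        rcases eq_or_lt_of_le hj with rfl | h'
        · exfalso; exact hnem t ht (by rw [hw, hms])
        · exact h'
      exact Set.mem_biUnion (Finset.mem_range.2 hjs) ⟨hmem t ht, hw⟩
    calc (KK x).ncard ≤ (⋃ j ∈ Finset.range s,
            {t : G | t ∈ zpowers g ∧ orderOf t = d1 * p ^ j}).ncard :=
          Set.ncard_le_ncard hcover (Set.toFinite _)
      _ ≤ ∑ j ∈ Finset.range s, {t : G | t ∈ zpowers g ∧ orderOf t = d1 * p ^ j}.ncard :=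
          ncard_biUnion_le _ _
      _ = ∑ j ∈ Finset.range s, (d1 * p ^ j).totient := by
          refine Finset.sum_congr rfl fun j hj => ?_
          refine count_orderOf g ?_
          have hdd : d1 * p ^ j ∣ m := by
            rw [hms]
            exact mul_dvd_mul_left d1 (pow_dvd_pow p (le_of_lt (Finset.mem_range.1 hj)))
          exact hdd
      _ ≤ (d1 * p ^ s).totient := sum_tot d1 p hp hd1pos s
      _ = m.totient := by rw [← hms]

theorem stmt15 {G : Type*} [Group G] [Finite G] (hnc : ¬ IsCyclic G)
    (a b : G) (hne : a ≠ b) (hnadj : ¬ padj a b) (hN : Ncount a ≠ Ncount b) :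
    eadj a b ↔
      ∃ c : G, padj a c ∧ padj b c ∧ max (Ncount a) (Ncount b) ≤ Ncount c := by
  constructor
  · rintro ⟨hne', d, had, hbd⟩
    obtain ⟨c, hdc, hcmax⟩ : ∃ c : G, zpowers d ≤ zpowers c ∧
        ∀ t : G, zpowers c ≤ zpowers t → zpowers c = zpowers t := by
      obtain ⟨c, hc, hmaxc⟩ := Set.Finite.exists_maximalFor (fun e : G => orderOf e)
        {e : G | zpowers d ≤ zpowers e} (Set.toFinite _) ⟨d, show zpowers d ≤ zpowers d from le_rfl⟩
      refine ⟨c, hc, fun t hct => ?_⟩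
      have htmem : zpowers d ≤ zpowers t := le_trans hc hct
      have hdd : orderOf c ∣ orderOf t := orderOf_dvd_of_zle hct
      have heq : orderOf c = orderOf t :=
        le_antisymm (Nat.le_of_dvd (orderOf_pos t) hdd) (hmaxc (j := t) htmem (Nat.le_of_dvd (orderOf_pos t) hdd))
      exact zeq_of_zle_of_dvd hct (by rw [heq])
    have hac : zpowers a ≤ zpowers c := le_trans (zpowers_le.2 had) hdc
    have hbc : zpowers b ≤ zpowers c := le_trans (zpowers_le.2 hbd) hdc
    have hanec : a ≠ c := by rintro rfl; exact hnadj ⟨hne, Or.inr hbc⟩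
    have hbnec : b ≠ c := by rintro rfl; exact hnadj ⟨hne, Or.inl hac⟩
    have main : ∀ x : G, zpowers x ≤ zpowers c → cnb x ≠ cnb c →
        (KK x).ncard ≤ (orderOf c).totient := by
      intro x hxc hxne
      apply key c x
      intro t ht
      have hcmem : c ∈ cnb t := by
        rw [show cnb t = cnb x from ht]
        exact Or.inl hxc
      have hle : zpowers t ≤ zpowers c := by
        rcases hcmem with h' | h'
        · exact h'
        · exact (hcmax t h').ge
      refine lt_of_le_of_ne hle ?_
      intro heq
      exact hxne (by rw [← show cnb t = cnb x from ht]; exact cnb_congr heq)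
    have hNa : Ncount a ≤ Ncount c := by
      rw [Ncount_eq, Ncount_eq]
      refine le_trans (main a hac ?_) (gen_le_K c)
      intro heq
      apply hnadj
      have hb : b ∈ cnb a := by rw [heq]; exact Or.inr hbc
      exact ⟨hne, hb⟩
    have hNb : Ncount b ≤ Ncount c := by
      rw [Ncount_eq, Ncount_eq]
      refine le_trans (main b hbc ?_) (gen_le_K c)
      intro heq
      apply hnadj
      have hb : a ∈ cnb b := by rw [heq]; exact Or.inr hac
      exact ⟨hne, Or.symm hb⟩
    exact ⟨c, ⟨hanec, Or.inl hac⟩, ⟨hbnec, Or.inl hbc⟩, max_le hNa hNb⟩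
  · rintro ⟨c, ⟨hanec, hca⟩, ⟨hbnec, hcb⟩, hmaxN⟩
    rcases hca with h1 | h1
    · rcases hcb with h2 | h2
      · exact ⟨hne, c, h1 (mem_zpowers a), h2 (mem_zpowers b)⟩
      · exact absurd ⟨hne, Or.inl (le_trans h1 h2)⟩ hnadj
    · rcases hcb with h2 | h2
      · exact absurd ⟨hne, Or.inr (le_trans h2 h1)⟩ hnadj
      · by_contra headj
        have hstep : ∀ t ∈ KK c, zpowers t < zpowers a ∧ zpowers t < zpowers b := by
          intro t ht
          have hat : a ∈ cnb t := by
            rw [show cnb t = cnb c from ht]; exact Or.inl h1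
          have hbt : b ∈ cnb t := by
            rw [show cnb t = cnb c from ht]; exact Or.inl h2
          have hta : zpowers t ≤ zpowers a := by
            rcases hat with h' | h'
            · exact h'
            · rcases hbt with h'' | h''
              · exact absurd ⟨hne, Or.inl (le_trans h' h'')⟩ hnadj
              · exact absurd ⟨hne, t, h' (mem_zpowers a), h'' (mem_zpowers b)⟩ headj
          have htb : zpowers t ≤ zpowers b := by
            rcases hbt with h' | h'
            · exact h'
            · rcases hat with h'' | h''
              · exact absurd ⟨hne, Or.inr (le_trans h' h'')⟩ hnadj
              · exact absurd ⟨hne, t, h'' (mem_zpowers a), h' (mem_zpowers b)⟩ headj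
          constructor
          · refine lt_of_le_of_ne hta ?_
            intro heq
            apply hnadj
            have hb : b ∈ cnb a := by
              rw [← cnb_congr heq, show cnb t = cnb c from ht]
              exact Or.inl h2
            exact ⟨hne, hb⟩
          · refine lt_of_le_of_ne htb ?_
            intro heq
            apply hnadj
            have hb : a ∈ cnb b := by
              rw [← cnb_congr heq, show cnb t = cnb c from ht]
              exact Or.inl h1
            exact ⟨hne, Or.symm hb⟩
        have h3 : Ncount c ≤ Ncount a := by
          rw [Ncount_eq, Ncount_eq]
          exact le_trans (key a c fun t ht => (hstep t ht).1) (gen_le_K a)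
        have h4 : Ncount c ≤ Ncount b := by
          rw [Ncount_eq, Ncount_eq]
          exact le_trans (key b c fun t ht => (hstep t ht).2) (gen_le_K b)
        have h5 : Ncount a ≤ Ncount c := le_trans (le_max_left _ _) hmaxN
        have h6 : Ncount b ≤ Ncount c := le_trans (le_max_right _ _) hmaxN
        omega
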